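/- Let λ ∈ ℂ be such that λ is not a real number in the interval (0, 1] (i.e., it is not the case that Im λ = 0 and 0 < Re λ ≤ 1). Then there is no bounded linear operator E on ℓ²(ℕ, ℂ) satisfying (E f)(n) = Σ_{k=0}^{n} C(n,k) λ^k (1−λ)^{n−k} f(k) for all f ∈ ℓ²(ℕ, ℂ) and all n ∈ ℕ; that is, the Euler operator E_λ is unbounded. -/

import Mathlib

lemma exists_t (l : ℂ) (hl : ¬ (l.im = 0 ∧ 0 < l.re ∧ l.re ≤ 1)) :
    ∃ t : ℂ, ‖t‖ < 1 ∧ 1 ≤ ‖1 - l + l * t‖ := by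
  by_cases h1 : 1 ≤ ‖(1:ℂ) - l‖
  · exact ⟨0, by norm_num, by simpa using h1⟩
  push_neg at h1
  have hl0 : l ≠ 0 := by rintro rfl; simp at h1
  set A := ‖l‖ with hA
  set B := ‖(1:ℂ) - l‖ with hB
  set a := l.re with ha
  set b := l.im with hb
  have hA2 : A ^ 2 = a ^ 2 + b ^ 2 := by
    rw [hA, Complex.sq_norm, Complex.normSq_apply]; ring
  have hB2 : B ^ 2 = (1 - a) ^ 2 + b ^ 2 := by
    rw [hB, Complex.sq_norm, Complex.normSq_apply]
    simp [Complex.sub_re, Complex.sub_im]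
    ring
  have hA0 : 0 < A := by rw [hA]; exact norm_pos_iff.2 hl0
  have hB0 : 0 < B := by
    rw [hB]
    refine norm_pos_iff.2 (sub_ne_zero.2 ?_)
    rintro rfl
    exact hl ⟨by simp [hb], by simp [ha], by simp [ha]⟩
  have hAB : 1 < A + B := by
    by_contra hc
    push_neg at hc
    have h2 : A ≤ 1 - B := by linarith
    have h3 : A ^ 2 ≤ (1 - B) ^ 2 := by nlinarith
    have h4 : B ≤ 1 - a := by nlinarith
    have h5 : b ^ 2 ≤ 0 := by nlinarith
    have hbz : b = 0 := by nlinarith [sq_nonneg b]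
    have hap : 0 < a := by nlinarith
    have hal : a ≤ 1 := by nlinarith
    exact hl ⟨hbz, hap, hal⟩
  set c : ℝ := (1 - B) / (A ^ 2 * B) with hc
  have hc0 : 0 ≤ c := by
    rw [hc]; exact div_nonneg (by linarith) (by positivity)
  refine ⟨(c : ℂ) * ((starRingEnd ℂ) l * (1 - l)), ?_, ?_⟩
  · have h7 : ‖(c : ℂ) * ((starRingEnd ℂ) l * (1 - l))‖ = c * (A * B) := by
      rw [norm_mul, norm_mul, Complex.norm_real, RCLike.norm_conj, Real.norm_eq_abs,
        abs_of_nonneg hc0]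
    rw [h7, hc]
    rw [div_mul_eq_mul_div, div_lt_one (by positivity)]
    nlinarith [mul_lt_mul_of_pos_right (show 1 - B < A by linarith) (mul_pos hA0 hB0)]
  · have hlc : l * (starRingEnd ℂ) l = (A : ℂ) ^ 2 := by
      rw [Complex.mul_conj]
      norm_cast
      rw [hA]
      exact (Complex.sq_norm l).symm
    have hmc : l * ((c : ℂ) * ((starRingEnd ℂ) l * (1 - l))) = (c : ℂ) * (A : ℂ) ^ 2 * (1 - l) := by
      rw [← hlc]; ring
    rw [hmc]
    have h8 : 1 - l + (c : ℂ) * (A : ℂ) ^ 2 * (1 - l) = (1 - l) * (((1 + c * A ^ 2 : ℝ)) : ℂ) := by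
      push_cast; ring
    rw [h8, norm_mul]
    have h6 : ‖(((1 + c * A ^ 2 : ℝ)) : ℂ)‖ = 1 + c * A ^ 2 := by
      rw [Complex.norm_real, Real.norm_eq_abs, abs_of_nonneg (by positivity)]
    rw [h6, ← hB]
    have h9 : c * A ^ 2 = (1 - B) / B := by
      rw [hc]; field_simp
    rw [h9, mul_add, mul_one, mul_div_cancel₀ _ (ne_of_gt hB0)]
    linarith


lemma geo_memℓp (t : ℂ) (ht : ‖t‖ < 1) : Memℓp (fun k : ℕ => t ^ k) 2 := by
  apply memℓp_gen
  have h2 : (2 : ENNReal).toReal = (2 : ℝ) := by norm_num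
  have he : (fun k : ℕ => ‖t ^ k‖ ^ (2 : ENNReal).toReal) = fun k : ℕ => (‖t‖ ^ 2) ^ k := by
    funext k
    rw [h2, norm_pow, show (2:ℝ) = ((2:ℕ):ℝ) by norm_num, Real.rpow_natCast]
    ring
  rw [he]
  refine summable_geometric_of_lt_one (by positivity) ?_
  have : ‖t‖ ^ 2 < 1 ^ 2 := by
    apply pow_lt_pow_left₀ ht (norm_nonneg t)
    norm_num
  simpa using this

theorem stmt14 (l : ℂ) (hl : ¬ (l.im = 0 ∧ 0 < l.re ∧ l.re ≤ 1)) :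
    ¬ ∃ E : lp (fun _ : ℕ => ℂ) 2 →L[ℂ] lp (fun _ : ℕ => ℂ) 2,
      ∀ f (n : ℕ), E f n = ∑ k ∈ Finset.range (n+1),
        (n.choose k : ℂ) * l^k * (1 - l)^(n-k) * f k := by
  have ht' := exists_t l hl
  rintro ⟨E, hE⟩
  obtain ⟨t, ht, hs⟩ := ht'
  set s : ℂ := 1 - l + l * t with hsdef
  set g : lp (fun _ : ℕ => ℂ) 2 := ⟨fun k => t ^ k, geo_memℓp t ht⟩ with hg
  have hEg : ∀ n : ℕ, (E g) n = s ^ n := by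
    intro n
    rw [hE g n]
    have hcoe : ∀ k : ℕ, (g : ∀ _ : ℕ, ℂ) k = t ^ k := fun k => rfl
    calc ∑ k ∈ Finset.range (n+1), (n.choose k : ℂ) * l^k * (1 - l)^(n-k) * g k
        = ∑ k ∈ Finset.range (n+1), (l*t)^k * (1-l)^(n-k) * (n.choose k : ℂ) := by
          refine Finset.sum_congr rfl fun k _ => ?_
          rw [hcoe k, mul_pow]
          ring
      _ = (l * t + (1 - l)) ^ n := (add_pow (l*t) (1-l) n).symm
      _ = s ^ n := by rw [hsdef]; ring_nf
  have hmem : Memℓp (fun n : ℕ => s ^ n) 2 := by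
    have := lp.memℓp (E g)
    have hfun : ⇑(E g) = fun n : ℕ => s ^ n := funext hEg
    rwa [hfun] at this
  -- contradiction: terms don't tend to zero
  have hsum : Summable (fun n : ℕ => ‖s ^ n‖ ^ (2 : ENNReal).toReal) := (memℓp_gen_iff (by norm_num)).1 hmem
  have htend := hsum.tendsto_atTop_zero
  have hge : ∀ n : ℕ, (1:ℝ) ≤ ‖s ^ n‖ ^ (2 : ENNReal).toReal := by
    intro n
    rw [norm_pow]
    apply Real.one_le_rpow
    · exact one_le_pow₀ hs
    · norm_num
  have : (1:ℝ) ≤ 0 := le_of_tendsto_of_tendsto tendsto_const_nhds htend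
    (Filter.Eventually.of_forall hge)
  linarith
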